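/- There is a constant Λ₂ such that for every t > 0 and every 0 < r < s one has r·η(t/r) ≤ Λ₂·s·η(t/s). -/

import Mathlib

open Set Filter Topology

/-- Hypotheses (P1)–(P3) on `φ(t) = η(t)·t`. -/
def PhiHyp (φ η : ℝ → ℝ) (Lam0 : ℝ) : Prop :=
  (∀ t : ℝ, 0 ≤ t → φ t = η t * t) ∧
  (∀ t : ℝ, 0 ≤ t → 1 ≤ η t) ∧
  MonotoneOn φ (Set.Ici 0) ∧
  (∀ t₀ : ℝ, 0 < t₀ → ∃ ε > (0 : ℝ), ∃ K : NNReal,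
    LipschitzOnWith K φ (Set.Ioo (t₀ - ε) (t₀ + ε))) ∧
  (∀ t : ℝ, 0 ≤ t → t ≤ φ t) ∧
  AntitoneOn η (Set.Ioo 0 1) ∧
  MonotoneOn η (Set.Ici 1) ∧
  (∃ T : ℝ, ∀ t : ℝ, T ≤ t → DifferentiableAt ℝ η t) ∧
  Filter.Tendsto (fun t => t * deriv η t / η t * Real.log (η t)) Filter.atTop (nhds 0) ∧
  0 < Lam0 ∧
  (∀ s t : ℝ, 0 < s → 0 < t → η (s * t) ≤ Lam0 * η s * η t)

/-- Lemma 2.4 (iv): there is `Λ₂` such that `r·η(t/r) ≤ Λ₂·s·η(t/s)` for all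
`t > 0` and `0 < r < s`. -/
private lemma eta_linear_bound (η : ℝ → ℝ)
    (hη1 : ∀ t : ℝ, 0 ≤ t → 1 ≤ η t)
    (hmono : MonotoneOn η (Set.Ici 1))
    (hdiff : ∃ T : ℝ, ∀ t : ℝ, T ≤ t → DifferentiableAt ℝ η t)
    (htend : Filter.Tendsto (fun t => t * deriv η t / η t * Real.log (η t)) Filter.atTop (nhds 0)) :
    ∃ C : ℝ, 1 ≤ C ∧ ∀ u : ℝ, 1 ≤ u → η u ≤ C * u := by
  obtain ⟨T, hT⟩ := hdiff
  -- eventually the expression is ≤ 1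
  have hev : ∀ᶠ t in atTop, t * deriv η t / η t * Real.log (η t) ≤ 1 := by
    have := htend.eventually (eventually_le_nhds (by norm_num : (0:ℝ) < 1))
    exact this
  obtain ⟨T₁', hT₁'⟩ := eventually_atTop.mp hev
  set T₁ : ℝ := max (max T 1) T₁' with hT₁def
  have hT₁ge1 : (1:ℝ) ≤ T₁ := le_trans (le_max_right T 1) (le_max_left _ _)
  have hT₁geT : T ≤ T₁ := le_trans (le_max_left T 1) (le_max_left _ _)
  have hT₁pos : (0:ℝ) < T₁ := lt_of_lt_of_le one_pos hT₁ge1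
  have hdiff' : ∀ t : ℝ, T₁ ≤ t → DifferentiableAt ℝ η t :=
    fun t ht => hT t (le_trans hT₁geT ht)
  have hηpos : ∀ t : ℝ, (0:ℝ) ≤ t → 0 < η t := fun t ht => lt_of_lt_of_le one_pos (hη1 t ht)
  set g : ℝ → ℝ := fun t => Real.log (η t) with hg
  set F : ℝ → ℝ := fun t => (g t)^2 - 2 * Real.log t with hF
  have hderivF : ∀ t : ℝ, T₁ ≤ t → HasDerivAt F (2 * g t * (deriv η t / η t) - 2 * (1/t)) t := by
    intro t ht
    have htpos : (0:ℝ) < t := lt_of_lt_of_le hT₁pos ht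
    have hηd : HasDerivAt η (deriv η t) t := (hdiff' t ht).hasDerivAt
    have hgd : HasDerivAt g (deriv η t / η t) t := hηd.log (ne_of_gt (hηpos t htpos.le))
    have hsq : HasDerivAt (fun t => (g t)^2) (2 * g t * (deriv η t / η t)) t := by
      have := hgd.fun_pow 2
      simpa [pow_one, mul_comm, mul_assoc, mul_left_comm] using this
    have hlog : HasDerivAt (fun t => 2 * Real.log t) (2 * (1/t)) t := by
      simpa [one_div] using (Real.hasDerivAt_log (ne_of_gt htpos)).const_mul 2
    exact hsq.sub hlog
  have hanti : AntitoneOn F (Set.Ici T₁) := by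
    apply antitoneOn_of_deriv_nonpos (convex_Ici T₁)
    · intro t ht
      exact ((hderivF t ht).differentiableAt.continuousAt).continuousWithinAt
    · intro t ht
      rw [interior_Ici] at ht
      exact (hderivF t (le_of_lt ht)).differentiableAt.differentiableWithinAt
    · intro t ht
      rw [interior_Ici] at ht
      have htT : T₁ ≤ t := le_of_lt ht
      have htpos : (0:ℝ) < t := lt_of_lt_of_le hT₁pos htT
      rw [(hderivF t htT).deriv]
      have hkey : t * deriv η t / η t * Real.log (η t) ≤ 1 :=
        hT₁' t (le_trans (le_max_right _ _) htT)
      -- g t * (deriv η t / η t) ≤ 1/t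
      have hne : η t ≠ 0 := ne_of_gt (hηpos t htpos.le)
      have h2 : g t * (deriv η t / η t) ≤ 1 / t := by
        have heq : g t * (deriv η t / η t)
            = (t * deriv η t / η t * Real.log (η t)) / t := by
          field_simp
          ring
        rw [heq]
        exact (div_le_div_iff_of_pos_right htpos).mpr hkey
      nlinarith [h2]
  have hgnonneg : ∀ t : ℝ, 1 ≤ t → 0 ≤ g t := by
    intro t ht
    exact Real.log_nonneg (hη1 t (le_trans zero_le_one ht))
  set B : ℝ := (g T₁)^2 with hB
  have hbound : ∀ x : ℝ, T₁ ≤ x → (g x)^2 ≤ B + 2 * Real.log x := by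
    intro x hx
    have := hanti (self_mem_Ici) (mem_Ici.mpr hx) hx
    have hlogT₁ : 0 ≤ Real.log T₁ := Real.log_nonneg hT₁ge1
    simp only [hF] at this
    nlinarith
  set T₂ : ℝ := max T₁ (Real.exp (1 + Real.sqrt (1 + B))) with hT₂def
  have hT₂geT₁ : T₁ ≤ T₂ := le_max_left _ _
  have hT₂ge1 : (1:ℝ) ≤ T₂ := le_trans hT₁ge1 hT₂geT₁
  have hBnonneg : 0 ≤ B := sq_nonneg _
  have hlarge : ∀ x : ℝ, T₂ ≤ x → η x ≤ x := by
    intro x hx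
    have hxT₁ : T₁ ≤ x := le_trans hT₂geT₁ hx
    have hx1 : (1:ℝ) ≤ x := le_trans hT₂ge1 hx
    have hxpos : (0:ℝ) < x := lt_of_lt_of_le one_pos hx1
    have hlogx : 1 + Real.sqrt (1 + B) ≤ Real.log x := by
      have := Real.exp_le_exp.mpr (le_refl (1 + Real.sqrt (1 + B)))
      calc 1 + Real.sqrt (1 + B) = Real.log (Real.exp (1 + Real.sqrt (1 + B))) := (Real.log_exp _).symm
        _ ≤ Real.log x := Real.log_le_log (Real.exp_pos _) (le_trans (le_max_right _ _) hx)
    have hsqrt : Real.sqrt (1 + B) ^ 2 = 1 + B := Real.sq_sqrt (by linarith)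
    have hLsq : B + 2 * Real.log x ≤ (Real.log x)^2 := by
      nlinarith [Real.sqrt_nonneg (1 + B)]
    have hgx : g x ≤ Real.log x := by
      have h1 : (g x)^2 ≤ (Real.log x)^2 := le_trans (hbound x hxT₁) hLsq
      have h2 : 0 ≤ g x := hgnonneg x hx1
      have h3 : 0 ≤ Real.log x := Real.log_nonneg hx1
      nlinarith
    calc η x = Real.exp (g x) := (Real.exp_log (hηpos x hxpos.le)).symm
      _ ≤ Real.exp (Real.log x) := Real.exp_le_exp.mpr hgx
      _ = x := Real.exp_log hxpos
  refine ⟨max 1 (η T₂), le_max_left _ _, ?_⟩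
  intro u hu
  rcases le_total u T₂ with h | h
  · calc η u ≤ η T₂ := hmono (mem_Ici.mpr hu) (mem_Ici.mpr hT₂ge1) h
      _ ≤ max 1 (η T₂) * 1 := by rw [mul_one]; exact le_max_right _ _
      _ ≤ max 1 (η T₂) * u := by
          apply mul_le_mul_of_nonneg_left hu
          exact le_trans zero_le_one (le_max_left _ _)
  · calc η u ≤ u := hlarge u h
      _ = 1 * u := (one_mul u).symm
      _ ≤ max 1 (η T₂) * u := by
          apply mul_le_mul_of_nonneg_right (le_max_left _ _) (le_trans zero_le_one hu)

theorem statement4 (φ η : ℝ → ℝ) (Lam0 : ℝ) (hφ : PhiHyp φ η Lam0) :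
    ∃ Lam2 : ℝ, ∀ t r s : ℝ, 0 < t → 0 < r → r < s →
      r * η (t / r) ≤ Lam2 * s * η (t / s) := by
  obtain ⟨-, hη1, -, -, -, -, hmono, hdiff, htend, hL0, hsub⟩ := hφ
  obtain ⟨C, hC1, hC⟩ := eta_linear_bound η hη1 hmono hdiff htend
  refine ⟨Lam0 * C, ?_⟩
  intro t r s ht hr hrs
  have hs : 0 < s := lt_trans hr hrs
  have hts : 0 < t / s := div_pos ht hs
  have hsr : (1:ℝ) < s / r := (one_lt_div hr).mpr hrs
  have hsr0 : (0:ℝ) < s / r := lt_trans one_pos hsr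
  have key : t / r = (s / r) * (t / s) := by field_simp
  have h1 : η (t / r) ≤ Lam0 * η (s / r) * η (t / s) := by
    rw [key]; exact hsub (s / r) (t / s) hsr0 hts
  have h2 : η (s / r) ≤ C * (s / r) := hC (s / r) hsr.le
  have hηts : 0 ≤ η (t / s) := le_trans zero_le_one (hη1 _ hts.le)
  have h3 : r * η (t / r) ≤ r * (Lam0 * η (s / r) * η (t / s)) :=
    mul_le_mul_of_nonneg_left h1 hr.le
  have h4 : r * (Lam0 * η (s / r) * η (t / s)) ≤ r * (Lam0 * (C * (s / r)) * η (t / s)) := by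
    apply mul_le_mul_of_nonneg_left _ hr.le
    apply mul_le_mul_of_nonneg_right _ hηts
    exact mul_le_mul_of_nonneg_left h2 hL0.le
  have h5 : r * (Lam0 * (C * (s / r)) * η (t / s)) = Lam0 * C * s * η (t / s) := by
    rw [div_eq_mul_inv]
    field_simp
  linarith
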